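/- arXiv:1805.10040 — 3 statements merged into one kernel-verified Lean document; each statement's English description precedes it below -/
import Mathlib

section
/- For the weight function w(t) = 1/(1-t) (stress parameter b = 1), the weighted mean square error equals n/2 - Σ_{i=1}^n [2 F(x_{(i)}) + ((2(n-i)+1)/n) ln(1 - F(x_{(i)}))], where x_{(1)} ≤ ... ≤ x_{(n)} are the order statistics. -/
open MeasureTheory Filter Set

lemma stieltjes_map_measure (F : StieltjesFunction ℝ) (hFcont : Continuous F)
    (hF0 : Tendsto F atBot (nhds 0)) (hF1 : Tendsto F atTop (nhds 1)) :
    Measure.map F F.measure = volume.restrict (Set.Ioo (0:ℝ) 1) := by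
  have hnn : ∀ t, 0 ≤ F t := fun t =>
    le_of_tendsto hF0 (eventually_atBot.2 ⟨t, fun s hs => F.mono hs⟩)
  have hle1 : ∀ t, F t ≤ 1 := fun t =>
    ge_of_tendsto hF1 (eventually_atTop.2 ⟨t, fun s hs => F.mono hs⟩)
  have hprob : IsProbabilityMeasure F.measure := F.isProbabilityMeasure hF0 hF1
  have hmap : IsFiniteMeasure (Measure.map F F.measure) := by
    haveI := Measure.isProbabilityMeasure_map (μ := F.measure) hFcont.measurable.aemeasurable (f := F)
    infer_instance
  refine Measure.ext_of_Iic _ _ fun a => ?_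
  rw [Measure.map_apply hFcont.measurable measurableSet_Iic,
    Measure.restrict_apply' measurableSet_Ioo]
  rcases lt_or_ge a 0 with ha | ha
  · have h1 : F ⁻¹' Iic a = ∅ := by
      ext t; simp only [mem_preimage, mem_Iic, mem_empty_iff_false, iff_false, not_le]
      exact lt_of_lt_of_le ha (hnn t)
    have h2 : Iic a ∩ Ioo (0:ℝ) 1 = ∅ := by
      ext t; simp only [mem_inter_iff, mem_Iic, mem_Ioo, mem_empty_iff_false, iff_false]
      rintro ⟨h1', h2', _⟩; linarith
    rw [h1, h2]; simp
  rcases lt_or_ge a 1 with ha1 | ha1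
  · -- 0 ≤ a < 1
    have h2 : Iic a ∩ Ioo (0:ℝ) 1 = Ioc 0 a := by
      ext t; simp only [mem_inter_iff, mem_Iic, mem_Ioo, mem_Ioc]
      constructor
      · rintro ⟨h1', h2', _⟩; exact ⟨h2', h1'⟩
      · rintro ⟨h1', h2'⟩; exact ⟨h2', h1', lt_of_le_of_lt h2' ha1⟩
    rw [h2, Real.volume_Ioc, sub_zero]
    by_cases hS : (F ⁻¹' Iic a).Nonempty
    · obtain ⟨T, hT⟩ : ∃ T, a < F T := (hF1.eventually (eventually_gt_nhds ha1)).exists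
      have hbdd : BddAbove (F ⁻¹' Iic a) := by
        refine ⟨T, fun t ht => ?_⟩
        by_contra h
        exact absurd (le_trans (F.mono (le_of_not_ge h)) ht) (not_le.2 hT)
      set b := sSup (F ⁻¹' Iic a) with hb
      have hclosed : IsClosed (F ⁻¹' Iic a) := isClosed_Iic.preimage hFcont
      have hbmem : b ∈ F ⁻¹' Iic a := hclosed.csSup_mem hS hbdd
      have hFba : F b ≤ a := hbmem
      have hFba' : a ≤ F b := by
        have htend : Tendsto F (nhdsWithin b (Ioi b)) (nhds (F b)) :=
          (hFcont.continuousAt).continuousWithinAt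
        refine ge_of_tendsto htend (eventually_nhdsWithin_of_forall fun t ht => ?_)
        by_contra h
        push_neg at h
        exact absurd (le_csSup hbdd h.le) (not_le.2 ht)
      have hFb : F b = a := le_antisymm hFba hFba'
      have hset : F ⁻¹' Iic a = Iic b := by
        ext t
        constructor
        · exact fun ht => le_csSup hbdd ht
        · exact fun ht => le_trans (F.mono ht) (le_of_eq hFb)
      rw [hset, F.measure_Iic hF0, hFb, sub_zero]
    · have he : F ⁻¹' Iic a = ∅ := not_nonempty_iff_eq_empty.1 hS
      have ha0 : a = 0 := by
        refine le_antisymm ?_ ha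
        by_contra h
        push_neg at h
        obtain ⟨t, ht⟩ := (hF0.eventually (eventually_lt_nhds h)).exists
        exact hS ⟨t, le_of_lt ht⟩
      rw [he, ha0]
      simp
  · -- a ≥ 1
    have h1 : F ⁻¹' Iic a = univ := by
      ext t; simp only [mem_preimage, mem_Iic, mem_univ, iff_true]
      exact le_trans (hle1 t) ha1
    have h2 : Iic a ∩ Ioo (0:ℝ) 1 = Ioo 0 1 := by
      ext t; simp only [mem_inter_iff, mem_Iic, mem_Ioo]
      exact ⟨fun h => h.2, fun h => ⟨le_trans h.2.le ha1, h⟩⟩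
    rw [h1, h2, F.measure_univ hF0 hF1, Real.volume_Ioo]

lemma stieltjes_level_null (F : StieltjesFunction ℝ) (hFcont : Continuous F)
    (hF0 : Tendsto F atBot (nhds 0)) (hF1 : Tendsto F atTop (nhds 1)) (c : ℝ) :
    F.measure {t | F t = c} = 0 := by
  have h : {t | F t = c} = F ⁻¹' {c} := rfl
  rw [h, ← Measure.map_apply hFcont.measurable (measurableSet_singleton c),
    stieltjes_map_measure F hFcont hF0 hF1, Measure.restrict_apply' measurableSet_Ioo]
  exact measure_mono_null inter_subset_left Real.volume_singleton

lemma hasDerivAt_H (a : ℝ) {u : ℝ} (hu : u ≠ 1) :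
    HasDerivAt (fun u => -(1-u)^2/2 - 2*(1-a)*u - (1-a)^2 * Real.log (1-u))
      ((a-u)^2/(1-u)) u := by
  have h1u : (1:ℝ) - u ≠ 0 := sub_ne_zero.2 (Ne.symm hu)
  have d1 : HasDerivAt (fun u : ℝ => -(1-u)^2/2) (1-u) u := by
    have h : HasDerivAt (fun u : ℝ => (1-u)^2) (2*(1-u)^1*(-1)) u :=
      (((hasDerivAt_id u).const_sub 1).pow 2)
    have h2 := (h.neg).div_const 2
    refine h2.congr_deriv ?_
    ring
  have d2 : HasDerivAt (fun u : ℝ => 2*(1-a)*u) (2*(1-a)) u := by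
    simpa using (hasDerivAt_id u).const_mul (2*(1-a))
  have d3 : HasDerivAt (fun u : ℝ => (1-a)^2 * Real.log (1-u)) ((1-a)^2 * (-1/(1-u))) u := by
    have hlog : HasDerivAt (fun u : ℝ => Real.log (1-u)) (-1/(1-u)) u := by
      have hc : HasDerivAt (fun u : ℝ => 1-u) (-1) u := by
        simpa using (hasDerivAt_id u).const_sub 1
      have h := (Real.hasDerivAt_log h1u).comp u hc
      refine h.congr_deriv ?_
      ring
    exact hlog.const_mul _
  have h := (d1.sub d2).sub d3
  refine h.congr_deriv ?_
  field_simp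
  ring

noncomputable def Haux (n k : ℕ) (u : ℝ) : ℝ :=
  -(1-u)^2/2 - 2*(1-(k:ℝ)/n)*u - (1-(k:ℝ)/n)^2 * Real.log (1-u)

lemma hasDerivAt_Haux (n k : ℕ) {u : ℝ} (hu : u ≠ 1) :
    HasDerivAt (Haux n k) (((k:ℝ)/n - u)^2/(1-u)) u :=
  hasDerivAt_H ((k:ℝ)/n) hu

lemma sq_div_self' (y : ℝ) : y^2/y = y := by
  rcases eq_or_ne y 0 with h | h
  · simp [h]
  · field_simp [h]

lemma card_filter_coe_lt (n k : ℕ) (hk : k ≤ n) :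
    (Finset.univ.filter fun j : Fin n => (j:ℕ) < k).card = k := by
  have h : (Finset.univ.filter fun j : Fin n => (j:ℕ) < k) =
      (Finset.range k).attachFin (fun m hm => lt_of_lt_of_le (Finset.mem_range.1 hm) hk) := by
    ext j
    simp [Finset.mem_attachFin]
  rw [h, Finset.card_attachFin, Finset.card_range]

/-- Upper-tail computation formula for stress parameter `b = 1` (weight `w(t)=1/(1-t)`):
the weighted mean square error equals
`n/2 - ∑ [2 F(x₍ᵢ₎) + ((2(n-i)+1)/n) ln(1 - F(x₍ᵢ₎))]`. -/
theorem upper_tail_statistic_b_one (n : ℕ) (hn : 0 < n) (F : StieltjesFunction ℝ)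
    (hFcont : Continuous F) (hF0 : Tendsto F atBot (nhds 0))
    (hF1 : Tendsto F atTop (nhds 1))
    (x : Fin n → ℝ) (hx : Monotone x)
    (hFx : ∀ i, F (x i) ∈ Set.Ico (0 : ℝ) 1) :
    (n : ℝ) *
      ∫ t, (((Finset.univ.filter fun i : Fin n => x i ≤ t).card : ℝ) / n - F t) ^ 2
          / (1 - F t) ∂F.measure
      = (n : ℝ) / 2 -
        ∑ i : Fin n,
          (2 * F (x i) +
            ((2 * ((n : ℝ) - ((i : ℕ) + 1)) + 1) / n) * Real.log (1 - F (x i))) := by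
  classical
  have hnne : (n:ℝ) ≠ 0 := Nat.cast_ne_zero.2 hn.ne'
  -- the count function and the substituted integrand
  set cnt : ℝ → ℕ := fun u => (Finset.univ.filter fun j : Fin n => F (x j) < u).card with hcnt
  set g : ℝ → ℝ := fun u => ((cnt u : ℝ)/n - u)^2/(1-u) with hg
  -- Step 1 : reduce the Stieltjes integral to an integral on (0,1)
  have hcnt_meas : Measurable fun u => (cnt u : ℝ) := by
    have h : (fun u => (cnt u : ℝ)) = fun u => ∑ j : Fin n, if F (x j) < u then (1:ℝ) else 0 := by
      funext u
      simp only [hcnt, Finset.card_filter]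
      push_cast
      rfl
    rw [h]
    exact Finset.measurable_sum _ fun j _ =>
      Measurable.ite (measurableSet_Ioi (a := F (x j))) measurable_const measurable_const
  have hg_meas : Measurable g := by
    apply Measurable.div
    · exact ((hcnt_meas.div_const _).sub measurable_id).pow_const 2
    · exact measurable_const.sub measurable_id
  have step1 : ∫ t, (((Finset.univ.filter fun i : Fin n => x i ≤ t).card : ℝ) / n - F t) ^ 2
      / (1 - F t) ∂F.measure = ∫ u in Set.Ioo (0:ℝ) 1, g u := by
    have hae : ∀ᵐ t ∂F.measure,
        (((Finset.univ.filter fun i : Fin n => x i ≤ t).card : ℝ) / n - F t) ^ 2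
          / (1 - F t) = g (F t) := by
      have hlevel : ∀ᵐ t ∂F.measure, ∀ j : Fin n, F t ≠ F (x j) := by
        rw [ae_all_iff]
        intro j
        have h0 : F.measure {t | F t = F (x j)} = 0 :=
          stieltjes_level_null F hFcont hF0 hF1 (F (x j))
        rw [ae_iff]
        simpa using h0
      filter_upwards [hlevel] with t ht
      have hfilter : (Finset.univ.filter fun i : Fin n => x i ≤ t)
          = (Finset.univ.filter fun j : Fin n => F (x j) < F t) := by
        apply Finset.filter_congr
        intro j _
        constructor
        · exact fun hj => lt_of_le_of_ne (F.mono hj) (Ne.symm (ht j))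
        · intro hj
          by_contra hc
          push_neg at hc
          exact absurd (F.mono hc.le) (not_le.2 hj)
      rw [hfilter]
    rw [integral_congr_ae hae,
      ← integral_map (hFcont.measurable.aemeasurable) hg_meas.aestronglyMeasurable,
      stieltjes_map_measure F hFcont hF0 hF1]
  rw [step1]
  -- Step 2 : split into pieces
  set v : ℕ → ℝ := fun k => if h : k < n then F (x ⟨k, h⟩) else 1 with hv
  set w : ℕ → ℝ := fun k => if k = 0 then 0 else v (k-1) with hw
  have hvi : ∀ i : Fin n, v i = F (x i) := fun i => by simp [hv, i.isLt]
  have hvlt : ∀ k (h : k < n), v k = F (x ⟨k, h⟩) := fun k h => by simp [hv, h]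
  have hvge : ∀ k, n ≤ k → v k = 1 := fun k h => by simp [hv, not_lt.2 h]
  have hwpos : ∀ k, k ≠ 0 → w k = v (k-1) := fun k h => by simp [hw, h]
  have hw0 : w 0 = 0 := by simp [hw]
  have hwsucc : ∀ k, w (k+1) = v k := fun k => by simp [hw]
  have hvn : v n = 1 := by simp [hv]
  have hwlast : w (n+1) = 1 := by rw [hwsucc, hvn]
  have hv0 : ∀ k, 0 ≤ v k := by
    intro k
    by_cases h : k < n
    · rw [hvlt k h]; exact (hFx _).1
    · rw [hvge k (not_lt.1 h)]; norm_num
  have hvle1 : ∀ k, v k ≤ 1 := by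
    intro k
    by_cases h : k < n
    · rw [hvlt k h]; exact (hFx _).2.le
    · rw [hvge k (not_lt.1 h)]
  have hvlt1 : ∀ k, k < n → v k < 1 := by
    intro k h
    rw [hvlt k h]; exact (hFx _).2
  have hvmono : Monotone v := by
    intro k l hkl
    by_cases hl : l < n
    · have hk : k < n := lt_of_le_of_lt hkl hl
      rw [hvlt k hk, hvlt l hl]
      exact F.mono (hx hkl)
    · rw [hvge l (not_lt.1 hl)]
      exact hvle1 k
  have hwmono : Monotone w := by
    apply monotone_nat_of_le_succ
    intro k
    rcases Nat.eq_zero_or_pos k with hk | hk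
    · subst hk; rw [hw0, hwsucc]; exact hv0 0
    · obtain ⟨m, rfl⟩ := Nat.exists_eq_succ_of_ne_zero hk.ne'
      rw [hwsucc, hwsucc]
      exact hvmono (Nat.le_succ m)
  -- the count is constant on pieces
  have hcnt_const : ∀ k, k ≤ n → ∀ u, w k < u → u < w (k+1) → cnt u = k := by
    intro k hk u hu1 hu2
    have hfil : (Finset.univ.filter fun j : Fin n => F (x j) < u)
        = (Finset.univ.filter fun j : Fin n => (j:ℕ) < k) := by
      apply Finset.filter_congr
      intro j _
      constructor
      · intro hj
        by_contra hjk
        push_neg at hjk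
        have hkn : k < n := lt_of_le_of_lt hjk j.isLt
        have hle : w (k+1) ≤ F (x j) := by
          rw [hwsucc, hvlt k hkn]
          exact F.mono (hx (show (⟨k, hkn⟩ : Fin n) ≤ j from hjk))
        linarith
      · intro hj
        have hk0 : k ≠ 0 := by omega
        have hkn' : k - 1 < n := by omega
        have hle : F (x j) ≤ w k := by
          rw [hwpos k hk0, hvlt (k-1) hkn']
          exact F.mono (hx (show j ≤ (⟨k-1, hkn'⟩ : Fin n) from by
            simp only [Fin.le_def]; omega))
        linarith
    rw [hcnt]
    simp only
    rw [hfil, card_filter_coe_lt n k hk]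
  -- integrability and evaluation of pieces
  have hwle : ∀ k, k ≤ n → w k ≤ w (k+1) := fun k _ => hwmono (Nat.le_succ k)
  have hwk_lt_one : ∀ k, k ≤ n → w (k+1) ≤ 1 := by
    intro k hk
    rw [hwsucc]; exact hvle1 k
  have hpiece : ∀ k, k ≤ n →
      (∫ u in w k..w (k+1), g u = Haux n k (w (k+1)) - Haux n k (w k)) ∧
      IntervalIntegrable g volume (w k) (w (k+1)) := by
    intro k hk
    have hab : w k ≤ w (k+1) := hwle k hk
    rcases lt_or_eq_of_le hk with hkn | hkn
    · -- k < n
      have hb1 : w (k+1) < 1 := by rw [hwsucc]; exact hvlt1 k hkn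
      set φ : ℝ → ℝ := fun u => ((k:ℝ)/n - u)^2/(1-u) with hφ
      have hgae : ∀ᵐ u ∂(volume : Measure ℝ), u ∈ Set.uIoc (w k) (w (k+1)) → g u = φ u := by
        have hne : ∀ᵐ u : ℝ ∂volume, u ≠ w (k+1) := by
          rw [ae_iff]
          simpa using Real.volume_singleton (x := w (k+1))
        filter_upwards [hne] with u hu hmem
        rw [Set.uIoc_of_le hab] at hmem
        have hmem' : u ∈ Set.Ioo (w k) (w (k+1)) := ⟨hmem.1, lt_of_le_of_ne hmem.2 hu⟩
        rw [hg]
        simp only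
        rw [hcnt_const k hk u hmem'.1 hmem'.2]
      have hcont : ContinuousOn φ (Set.uIcc (w k) (w (k+1))) := by
        apply ContinuousOn.div
        · fun_prop
        · fun_prop
        · intro u hu
          rw [Set.uIcc_of_le hab] at hu
          have : u < 1 := lt_of_le_of_lt hu.2 hb1
          intro h0
          have : u = 1 := by linarith [sub_eq_zero.1 h0]
          linarith
      have hint : IntervalIntegrable φ volume (w k) (w (k+1)) := hcont.intervalIntegrable
      have hint' : IntervalIntegrable g volume (w k) (w (k+1)) := by
        rw [intervalIntegrable_iff] at hint ⊢
        apply hint.congr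
        rw [Filter.EventuallyEq, ae_restrict_iff' measurableSet_uIoc]
        filter_upwards [hgae] with u hu hmem
        exact (hu hmem).symm
      constructor
      · rw [intervalIntegral.integral_congr_ae hgae]
        have hderiv : ∀ u ∈ Set.uIcc (w k) (w (k+1)),
            HasDerivAt (Haux n k) (φ u) u := by
          intro u hu
          rw [Set.uIcc_of_le hab] at hu
          exact hasDerivAt_Haux n k (by
            have : u < 1 := lt_of_le_of_lt hu.2 hb1
            linarith)
        exact intervalIntegral.integral_eq_sub_of_hasDerivAt hderiv hint
      · exact hint'
    · -- k = n
      rw [hkn] at hab ⊢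
      have hbeq : w (n+1) = 1 := hwlast
      set φ : ℝ → ℝ := fun u => 1 - u with hφ
      have hcnt1 : ∀ u, w n < u → cnt u = n := by
        intro u hu
        rcases lt_or_ge u (w (n+1)) with h | h
        · exact hcnt_const n le_rfl u hu h
        · have hall : (Finset.univ.filter fun j : Fin n => F (x j) < u) = Finset.univ := by
            apply Finset.filter_true_of_mem
            intro j _
            have := (hFx j).2
            rw [hbeq] at h
            linarith
          rw [hcnt]
          simp only
          rw [hall, Finset.card_univ, Fintype.card_fin]
      have hgae : ∀ᵐ u ∂(volume : Measure ℝ), u ∈ Set.uIoc (w n) (w (n+1)) → g u = φ u := by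
        refine Filter.Eventually.of_forall fun u hmem => ?_
        rw [Set.uIoc_of_le hab] at hmem
        rw [hg]
        simp only
        rw [hcnt1 u hmem.1, div_self hnne]
        simp only [hφ]
        exact sq_div_self' (1-u)
      have hint : IntervalIntegrable φ volume (w n) (w (n+1)) := by
        apply ContinuousOn.intervalIntegrable
        fun_prop
      have hint' : IntervalIntegrable g volume (w n) (w (n+1)) := by
        rw [intervalIntegrable_iff] at hint ⊢
        apply hint.congr
        rw [Filter.EventuallyEq, ae_restrict_iff' measurableSet_uIoc]
        filter_upwards [hgae] with u hu hmem
        exact (hu hmem).symm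
      constructor
      · rw [intervalIntegral.integral_congr_ae hgae]
        have hHn : Haux n n = fun u : ℝ => -(1-u)^2/2 := by
          funext u
          simp [Haux, div_self hnne]
        have hderiv : ∀ u ∈ Set.uIcc (w n) (w (n+1)), HasDerivAt (Haux n n) (φ u) u := by
          intro u _
          rw [hHn]
          have h : HasDerivAt (fun u : ℝ => (1-u)^2) (2*(1-u)^1*(-1)) u :=
            (((hasDerivAt_id u).const_sub 1).pow 2)
          have h2 := (h.neg).div_const 2
          refine h2.congr_deriv ?_
          simp [hφ]
        exact intervalIntegral.integral_eq_sub_of_hasDerivAt hderiv hint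
      · exact hint'
  -- assemble
  have hsplit : ∫ u in Set.Ioo (0:ℝ) 1, g u
      = ∑ k ∈ Finset.range (n+1), (Haux n k (w (k+1)) - Haux n k (w k)) := by
    have h1 : ∫ u in Set.Ioo (0:ℝ) 1, g u = ∫ u in (0:ℝ)..1, g u := by
      rw [intervalIntegral.integral_of_le zero_le_one, integral_Ioc_eq_integral_Ioo]
    have h2 : ∑ k ∈ Finset.range (n+1), ∫ u in w k..w (k+1), g u
        = ∫ u in (w 0)..(w (n+1)), g u :=
      intervalIntegral.sum_integral_adjacent_intervals fun k hk =>
        (hpiece k (Nat.lt_succ_iff.1 hk)).2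
    rw [h1, ← hw0, ← hwlast, ← h2]
    apply Finset.sum_congr rfl
    intro k hk
    exact (hpiece k (Nat.lt_succ_iff.1 (Finset.mem_range.1 hk))).1
  rw [hsplit]
  -- Step 3 : algebra
  have htel : ∀ k : ℕ, Haux n k (w (k+1)) - Haux n k (w k) =
      ((fun m => Haux n m (w m)) (k+1) - (fun m => Haux n m (w m)) k)
        + (Haux n k (w (k+1)) - Haux n (k+1) (w (k+1))) := by
    intro k
    simp only
    ring
  rw [Finset.sum_congr rfl fun k _ => htel k, Finset.sum_add_distrib,
    Finset.sum_range_sub (fun m => Haux n m (w m)), Finset.sum_range_succ]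
  have hc0 : Haux n 0 (w 0) = -(1/2) := by
    rw [hw0]
    norm_num [Haux, Real.log_one]
  have hcnn : Haux n n (w (n+1)) = 0 := by
    rw [hwlast]
    simp [Haux, div_self hnne]
  have hcn1 : Haux n (n+1) (w (n+1)) = -2*(1-((n:ℝ)+1)/n) := by
    rw [hwlast]
    simp [Haux, Real.log_zero]
  have hsum_eq : ∑ i : Fin n,
      (2 * F (x i) + ((2 * ((n : ℝ) - ((i : ℕ) + 1)) + 1) / n) * Real.log (1 - F (x i)))
      = ∑ k ∈ Finset.range n,
        (2 * v k + ((2 * ((n : ℝ) - (k + 1)) + 1) / n) * Real.log (1 - v k)) := by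
    rw [← Fin.sum_univ_eq_sum_range
      (fun k => 2 * v k + ((2 * ((n : ℝ) - (k + 1)) + 1) / n) * Real.log (1 - v k)) n]
    apply Finset.sum_congr rfl
    intro i _
    rw [hvi i]
  rw [hsum_eq]
  have hterm : ∀ k ∈ Finset.range n,
      Haux n k (w (k+1)) - Haux n (k+1) (w (k+1))
      = -(2 * v k + ((2 * ((n : ℝ) - (k + 1)) + 1) / n) * Real.log (1 - v k)) / n := by
    intro k hk
    rw [hwsucc]
    simp only [Haux]
    field_simp
    push_cast
    ring
  rw [Finset.sum_congr rfl hterm, hc0, hcnn, hcn1, ← Finset.sum_div,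
    Finset.sum_neg_distrib]
  field_simp
  ring
end

section
/- For a = 1, the expected value of the lower-tail weighted mean square error equals 1/2: E[ -3n/2 + Σ_{i=1}^n (2 U_{(i)} - ((2i-1)/n) ln U_{(i)}) ] = 1/2, where U_{(1)} ≤ ... ≤ U_{(n)} are the order statistics of n i.i.d. uniform random variables on [0,1]. -/
open MeasureTheory Set Finset Filter

namespace RiskAux

/-- The uniform measure on `[0,1]`. -/
noncomputable abbrev unif : Measure ℝ := volume.restrict (Set.Icc (0 : ℝ) 1)

instance : IsProbabilityMeasure unif := by
  constructor
  rw [Measure.restrict_apply_univ, Real.volume_Icc]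
  norm_num

/-- Coordinate evaluation is measure preserving from the product to `unif`. -/
lemma mp_eval {n : ℕ} (j : Fin n) :
    MeasurePreserving (fun ω : Fin n → ℝ => ω j)
      (Measure.pi fun _ : Fin n => unif) unif := by
  classical
  refine ⟨measurable_pi_apply j, ?_⟩
  ext s hs
  rw [Measure.map_apply (measurable_pi_apply j) hs]
  have hpre : (fun ω : Fin n → ℝ => ω j) ⁻¹' s
      = Set.univ.pi (Function.update (fun _ : Fin n => (Set.univ : Set ℝ)) j s) :=
    Set.eval_preimage
  rw [hpre, Measure.pi_pi,
    Finset.prod_eq_single j (fun i _ hij => by simp [Function.update_of_ne hij]) (by simp)]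
  simp

/-- A pair of distinct coordinate evaluations is measure preserving onto the product. -/
lemma mp_pair {n : ℕ} {j k : Fin n} (hjk : j ≠ k) :
    MeasurePreserving (fun ω : Fin n → ℝ => (ω j, ω k))
      (Measure.pi fun _ : Fin n => unif) (unif.prod unif) := by
  classical
  have hm : Measurable fun ω : Fin n → ℝ => (ω j, ω k) :=
    (measurable_pi_apply j).prodMk (measurable_pi_apply k)
  refine ⟨hm, ?_⟩
  refine (Measure.prod_eq ?_).symm
  intro s t hs ht
  rw [Measure.map_apply hm (hs.prod ht)]
  have hpre : (fun ω : Fin n → ℝ => (ω j, ω k)) ⁻¹' (s ×ˢ t)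
      = Set.univ.pi fun i => if i = j then s else if i = k then t else Set.univ := by
    ext ω
    simp only [Set.mem_preimage, Set.mem_prod, Set.mem_pi, Set.mem_univ, forall_true_left]
    constructor
    · rintro ⟨h1, h2⟩ i
      by_cases hij : i = j
      · subst hij; simpa using h1
      · by_cases hik : i = k
        · subst hik; simp [hij, h2]
        · simp [hij, hik]
    · intro h
      have h1 := h j
      have h2 := h k
      simp only [if_pos rfl] at h1
      rw [if_neg (Ne.symm hjk), if_pos rfl] at h2
      exact ⟨h1, h2⟩
  rw [hpre, Measure.pi_pi]
  rw [← Finset.prod_subset (Finset.subset_univ ({j, k} : Finset (Fin n)))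
    (fun x _ hx => by
      simp only [Finset.mem_insert, Finset.mem_singleton, not_or] at hx
      simp [hx.1, hx.2])]
  rw [Finset.prod_pair hjk]
  simp [Ne.symm hjk]

lemma ae_ne {n : ℕ} {j k : Fin n} (hjk : j ≠ k) :
    (Measure.pi fun _ : Fin n => unif) {ω | ω j = ω k} = 0 := by
  have hm : MeasurableSet {p : ℝ × ℝ | p.1 = p.2} :=
    measurableSet_eq_fun measurable_fst measurable_snd
  have hset : {ω : Fin n → ℝ | ω j = ω k}
      = (fun ω : Fin n → ℝ => (ω j, ω k)) ⁻¹' {p | p.1 = p.2} := rfl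
  rw [hset, ← Measure.map_apply (mp_pair hjk).measurable hm, (mp_pair hjk).map_eq,
    Measure.prod_apply hm]
  have hsl : ∀ x : ℝ, (Prod.mk x ⁻¹' {p : ℝ × ℝ | p.1 = p.2}) = {x} := by
    intro x; ext y; simp [eq_comm]
  have hsing : ∀ x : ℝ, unif {x} = 0 := by
    intro x
    rw [Measure.restrict_apply (measurableSet_singleton x)]
    exact measure_mono_null Set.inter_subset_left (measure_singleton x)
  simp [hsl, hsing]

lemma ae_inj (n : ℕ) :
    ∀ᵐ ω ∂(Measure.pi fun _ : Fin n => unif), Function.Injective ω := by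
  have h : (Measure.pi fun _ : Fin n => unif) {ω | ¬ Function.Injective ω} = 0 := by
    refine measure_mono_null
      (?_ : _ ⊆ ⋃ (j : Fin n) (k : Fin n) (_ : j ≠ k), {ω : Fin n → ℝ | ω j = ω k}) ?_
    · intro ω hω
      simp only [Set.mem_setOf_eq, Function.Injective] at hω
      push_neg at hω
      obtain ⟨j, k, hjk, hne⟩ := hω
      exact Set.mem_iUnion.2 ⟨j, Set.mem_iUnion.2 ⟨k, Set.mem_iUnion.2 ⟨hne, hjk⟩⟩⟩
    · exact measure_iUnion_null fun j => measure_iUnion_null fun k =>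
        measure_iUnion_null fun h => ae_ne h
  simpa [ae_iff] using h

lemma rank_sort {n : ℕ} {ω : Fin n → ℝ} (hω : Function.Injective ω) (i : Fin n) :
    (Finset.univ.filter fun k => ω k < ω (Tuple.sort ω i)).card = (i : ℕ) := by
  classical
  have hsm : StrictMono (ω ∘ Tuple.sort ω) :=
    (Tuple.monotone_sort ω).strictMono_of_injective (hω.comp (Tuple.sort ω).injective)
  have himg : (Finset.univ.filter fun k => ω k < ω (Tuple.sort ω i))
      = Finset.map (Tuple.sort ω).toEmbedding
          (Finset.univ.filter fun m => ω (Tuple.sort ω m) < ω (Tuple.sort ω i)) := by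
    ext k
    simp only [Finset.mem_filter, Finset.mem_univ, true_and, Finset.mem_map,
      Equiv.coe_toEmbedding]
    constructor
    · intro hk
      exact ⟨(Tuple.sort ω).symm k, by simpa using hk, by simp⟩
    · rintro ⟨m, hm, rfl⟩; exact hm
  rw [himg, Finset.card_map]
  have hfil : (Finset.univ.filter fun m => ω (Tuple.sort ω m) < ω (Tuple.sort ω i))
      = Finset.univ.filter fun m => m < i :=
    Finset.filter_congr fun m _ => by exact hsm.lt_iff_lt
  rw [hfil]
  have : (Finset.univ.filter fun m : Fin n => m < i) = Finset.Iio i := by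
    ext m; simp
  rw [this, Fin.card_Iio]

/-- The key deterministic identity: on injective tuples, the sorted sum can be
rewritten without the sorting permutation. -/
lemma sum_identity {n : ℕ} {ω : Fin n → ℝ} (hω : Function.Injective ω) :
    ∑ i : Fin n,
        (2 * ω (Tuple.sort ω i) -
          ((2 * (i : ℕ) + 1) / n) * Real.log (ω (Tuple.sort ω i)))
    = (∑ j : Fin n, 2 * ω j)
      + ((∑ j : Fin n, (-(1 / (n : ℝ))) * Real.log (ω j))
        + ∑ j : Fin n, ∑ k : Fin n,
            (-(2 / (n : ℝ))) * (if ω k < ω j then Real.log (ω j) else 0)) := by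
  classical
  have hstep1 : ∑ i : Fin n,
        (2 * ω (Tuple.sort ω i) -
          ((2 * (i : ℕ) + 1) / n) * Real.log (ω (Tuple.sort ω i)))
      = ∑ i : Fin n,
        (2 * ω (Tuple.sort ω i) -
          ((2 * (((Finset.univ.filter fun k => ω k < ω (Tuple.sort ω i)).card : ℕ) : ℝ) + 1) / n)
            * Real.log (ω (Tuple.sort ω i))) := by
    refine Finset.sum_congr rfl fun i _ => ?_
    rw [rank_sort hω i]
  refine hstep1.trans ?_
  refine (Equiv.sum_comp (Tuple.sort ω) (fun j =>
    2 * ω j - ((2 * (((Finset.univ.filter fun k => ω k < ω j).card : ℕ) : ℝ) + 1) / n)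
      * Real.log (ω j))).trans ?_
  rw [← Finset.sum_add_distrib, ← Finset.sum_add_distrib]
  refine Finset.sum_congr rfl fun j _ => ?_
  show 2 * ω j - ((2 * (((Finset.univ.filter fun k => ω k < ω j).card : ℕ) : ℝ) + 1) / n)
      * Real.log (ω j) = _
  have hcard : (((Finset.univ.filter fun k => ω k < ω j).card : ℕ) : ℝ)
      = ∑ k : Fin n, (if ω k < ω j then (1 : ℝ) else 0) := by
    rw [Finset.card_filter]
    push_cast
    exact Finset.sum_congr rfl fun k _ => by by_cases h : ω k < ω j <;> simp [h]
  have hT : ∑ k : Fin n, (-(2 / (n : ℝ))) * (if ω k < ω j then Real.log (ω j) else 0)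
      = (-(2 / (n : ℝ))) * Real.log (ω j)
          * ∑ k : Fin n, (if ω k < ω j then (1 : ℝ) else 0) := by
    rw [Finset.mul_sum]
    refine Finset.sum_congr rfl fun k _ => ?_
    by_cases h : ω k < ω j <;> simp [h]
  rw [hT, hcard]
  ring

lemma integral_id_unif : ∫ x, x ∂unif = 1 / 2 := by
  show (∫ x in Set.Icc (0:ℝ) 1, x) = 1 / 2
  rw [MeasureTheory.integral_Icc_eq_integral_Ioc,
    ← intervalIntegral.integral_of_le (by norm_num : (0:ℝ) ≤ 1), integral_id]
  norm_num

lemma integrableOn_log_Ioc : IntegrableOn Real.log (Set.Ioc (0:ℝ) 1) := by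
  have hg : IntegrableOn (fun x : ℝ => 2 * x ^ (-(1/2) : ℝ)) (Set.Ioc (0:ℝ) 1) := by
    have h := intervalIntegral.intervalIntegrable_rpow' (a := 0) (b := 1)
      (r := -(1/2)) (by norm_num)
    rw [intervalIntegrable_iff_integrableOn_Ioc_of_le (by norm_num : (0:ℝ) ≤ 1)] at h
    exact h.const_mul 2
  refine Integrable.mono hg Real.measurable_log.aestronglyMeasurable ?_
  rw [ae_restrict_iff' measurableSet_Ioc]
  refine ae_of_all _ fun x hx => ?_
  obtain ⟨hx0, hx1⟩ := hx
  have hxpow : 0 < x ^ (-(1/2) : ℝ) := Real.rpow_pos_of_pos hx0 _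
  rw [Real.norm_eq_abs, Real.norm_eq_abs, abs_of_nonpos (Real.log_nonpos hx0.le hx1),
    abs_of_nonneg (by positivity)]
  have h1 : Real.log (x ^ (-(1/2) : ℝ)) = -(1/2) * Real.log x := Real.log_rpow hx0 _
  have h2 : Real.log (x ^ (-(1/2) : ℝ)) ≤ x ^ (-(1/2) : ℝ) - 1 :=
    Real.log_le_sub_one_of_pos hxpow
  linarith

lemma integrable_log_unif : Integrable Real.log unif := by
  have h : IntegrableOn Real.log (Set.Icc (0:ℝ) 1) volume := by
    rw [integrableOn_Icc_iff_integrableOn_Ioc (μ := volume)]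
    exact integrableOn_log_Ioc
  exact h

lemma integral_log_unif : ∫ x, Real.log x ∂unif = -1 := by
  show (∫ x in Set.Icc (0:ℝ) 1, Real.log x) = -1
  rw [MeasureTheory.integral_Icc_eq_integral_Ioc]
  have hsets : ∀ m : ℕ, MeasurableSet (Set.Ioc (1/(m+1) : ℝ) 1) := fun m => measurableSet_Ioc
  have hmono : Monotone fun m : ℕ => Set.Ioc (1/(m+1) : ℝ) 1 := by
    intro a b hab
    refine Set.Ioc_subset_Ioc_left ?_
    have hcast : (a:ℝ) + 1 ≤ (b:ℝ) + 1 := by exact_mod_cast Nat.succ_le_succ hab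
    exact one_div_le_one_div_of_le (by positivity) hcast
  have hunion : (⋃ m : ℕ, Set.Ioc (1/(m+1) : ℝ) 1) = Set.Ioc (0:ℝ) 1 := by
    ext x
    simp only [Set.mem_iUnion, Set.mem_Ioc]
    constructor
    · rintro ⟨m, h1, h2⟩
      exact ⟨lt_trans (by positivity) h1, h2⟩
    · rintro ⟨h1, h2⟩
      obtain ⟨m, hm⟩ := exists_nat_one_div_lt h1
      exact ⟨m, hm, h2⟩
  have htendsto := tendsto_setIntegral_of_monotone hsets hmono
    (by rw [hunion]; exact integrableOn_log_Ioc)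
  rw [hunion] at htendsto
  have hval : ∀ m : ℕ, (∫ x in Set.Ioc (1/(m+1) : ℝ) 1, Real.log x)
      = -1 - ((1/(m+1) : ℝ) * Real.log (1/(m+1) : ℝ) - (1/(m+1) : ℝ)) := by
    intro m
    have hpos : (0:ℝ) < 1/(m+1) := by positivity
    have hle : (1/(m+1) : ℝ) ≤ 1 := by
      rw [div_le_one (by positivity)]
      simp
    rw [← intervalIntegral.integral_of_le hle, integral_log]
    simp [Real.log_one]
    ring
  have hlim : Tendsto (fun m : ℕ => ∫ x in Set.Ioc (1/(m+1) : ℝ) 1, Real.log x)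
      atTop (nhds (-1)) := by
    simp_rw [hval]
    have h0 : Tendsto (fun m : ℕ => (1/(m+1) : ℝ)) atTop (nhds 0) :=
      tendsto_one_div_add_atTop_nhds_zero_nat
    have h1 : Tendsto (fun m : ℕ => (1/(m+1) : ℝ) * Real.log (1/(m+1) : ℝ))
        atTop (nhds 0) := by
      have h2 := (Real.continuous_mul_log.tendsto 0).comp h0
      simpa [Function.comp_def] using h2
    have h3 : Tendsto (fun _ : ℕ => (-1:ℝ)) atTop (nhds (-1)) := tendsto_const_nhds
    have h4 := h3.sub (h1.sub h0)
    simpa using h4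
  exact tendsto_nhds_unique htendsto hlim

lemma integral_mul_log_unif : ∫ x, x * Real.log x ∂unif = -(1/4) := by
  show (∫ x in Set.Icc (0:ℝ) 1, x * Real.log x) = -(1/4)
  have hF : ∀ x ∈ Set.uIcc (0:ℝ) 1,
      HasDerivAt (fun y : ℝ => y^2/2 * Real.log y - y^2/4) (x * Real.log x) x := by
    intro x _
    rcases eq_or_ne x 0 with rfl | hx
    · have hval : (0:ℝ) * Real.log 0 = 0 := by simp
      rw [hval, hasDerivAt_iff_tendsto_slope]
      have heq : ∀ᶠ y in nhdsWithin (0:ℝ) {(0:ℝ)}ᶜ,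
          y * Real.log y / 2 - y / 4
            = slope (fun y : ℝ => y^2/2 * Real.log y - y^2/4) 0 y := by
        filter_upwards [self_mem_nhdsWithin] with y hy
        have hy' : (y : ℝ) ≠ 0 := hy
        rw [slope_def_field]
        field_simp
        ring
      refine Tendsto.congr' heq ?_
      have h1 : Tendsto (fun y : ℝ => y * Real.log y / 2 - y / 4) (nhds 0) (nhds 0) := by
        have h2 := Real.continuous_mul_log.tendsto 0
        have h3 : Tendsto (fun y : ℝ => y) (nhds (0:ℝ)) (nhds 0) := tendsto_id
        have := (h2.div_const 2).sub (h3.div_const 4)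
        simpa using this
      exact h1.mono_left nhdsWithin_le_nhds
    · have h1 : HasDerivAt (fun y : ℝ => y^2/2 * Real.log y)
          (x * Real.log x + x^2/2 * x⁻¹) x := by
        have hp : HasDerivAt (fun y : ℝ => y^2/2) x x := by
          have := (hasDerivAt_pow 2 x).div_const 2
          simpa using this
        exact hp.mul (Real.hasDerivAt_log hx)
      have h2 : HasDerivAt (fun y : ℝ => y^2/4) (x/2) x := by
        have := (hasDerivAt_pow 2 x).div_const 4
        refine this.congr_deriv ?_
        norm_num
        ring
      have := h1.sub h2
      refine this.congr_deriv ?_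
      field_simp
      ring
  have hI : (∫ y in (0:ℝ)..1, y * Real.log y) = -(1/4) := by
    rw [intervalIntegral.integral_eq_sub_of_hasDerivAt hF
      (Real.continuous_mul_log.intervalIntegrable 0 1)]
    norm_num
  rw [MeasureTheory.integral_Icc_eq_integral_Ioc,
    ← intervalIntegral.integral_of_le (by norm_num : (0:ℝ) ≤ 1)]
  exact hI

lemma measurable_pairfun :
    Measurable fun p : ℝ × ℝ => if p.1 < p.2 then Real.log p.2 else 0 :=
  Measurable.ite (measurableSet_lt measurable_fst measurable_snd)
    (Real.measurable_log.comp measurable_snd) measurable_const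

lemma integrable_pairfun :
    Integrable (fun p : ℝ × ℝ => if p.1 < p.2 then Real.log p.2 else 0)
      (unif.prod unif) := by
  have hmp : MeasurePreserving (Prod.snd) (unif.prod unif) unif := by
    refine ⟨measurable_snd, ?_⟩
    rw [Measure.map_snd_prod]
    simp
  have hsnd : Integrable (fun p : ℝ × ℝ => Real.log p.2) (unif.prod unif) := by
    have := (hmp.integrable_comp integrable_log_unif.aestronglyMeasurable).2
      integrable_log_unif
    simpa [Function.comp_def] using this
  refine hsnd.mono measurable_pairfun.aestronglyMeasurable (ae_of_all _ fun p => ?_)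
  by_cases h : p.1 < p.2 <;> simp [h]

lemma integral_pairfun :
    ∫ p : ℝ × ℝ, (if p.1 < p.2 then Real.log p.2 else 0) ∂(unif.prod unif)
      = -(1/4) := by
  rw [MeasureTheory.integral_prod_symm _ integrable_pairfun]
  have hinner : ∀ y ∈ Set.Icc (0:ℝ) 1,
      (∫ x, (if x < y then Real.log y else 0) ∂unif) = y * Real.log y := by
    intro y hy
    have hind : (fun x : ℝ => if x < y then Real.log y else 0)
        = Set.indicator (Set.Iio y) (fun _ => Real.log y) := by
      ext x
      by_cases h : x < y <;> simp [Set.indicator, h]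
    rw [hind, integral_indicator measurableSet_Iio, setIntegral_const]
    have hmeas : unif (Set.Iio y) = ENNReal.ofReal y := by
      rw [Measure.restrict_apply measurableSet_Iio]
      have hset : Set.Iio y ∩ Set.Icc 0 1 = Set.Ico 0 y := by
        ext z
        simp only [Set.mem_inter_iff, Set.mem_Iio, Set.mem_Icc, Set.mem_Ico]
        constructor
        · rintro ⟨h1, h2, h3⟩; exact ⟨h2, h1⟩
        · rintro ⟨h1, h2⟩; exact ⟨h2, h1, h2.le.trans hy.2⟩
      rw [hset, Real.volume_Ico]
      simp
    rw [measureReal_def, hmeas, ENNReal.toReal_ofReal hy.1]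
    simp [smul_eq_mul]
  have hcongr : (∫ y, (∫ x, (if x < y then Real.log y else 0) ∂unif) ∂unif)
      = ∫ y, y * Real.log y ∂unif := by
    refine integral_congr_ae ((ae_restrict_iff' measurableSet_Icc).mpr ?_)
    exact ae_of_all _ hinner
  rw [hcongr, integral_mul_log_unif]

lemma integral_comp_eval {n : ℕ} (j : Fin n) (g : ℝ → ℝ)
    (hg : AEStronglyMeasurable g unif) :
    ∫ ω : Fin n → ℝ, g (ω j) ∂(Measure.pi fun _ : Fin n => unif) = ∫ x, g x ∂unif := by
  have h := MeasureTheory.integral_map (φ := fun ω : Fin n → ℝ => ω j) (f := g)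
    (measurable_pi_apply j).aemeasurable (by rwa [(mp_eval j).map_eq])
  rw [(mp_eval j).map_eq] at h
  exact h.symm

lemma integrable_comp_eval {n : ℕ} (j : Fin n) {g : ℝ → ℝ} (hg : Integrable g unif) :
    Integrable (fun ω : Fin n → ℝ => g (ω j)) (Measure.pi fun _ : Fin n => unif) := by
  have h := ((mp_eval j).integrable_comp hg.aestronglyMeasurable).2 hg
  simpa [Function.comp_def] using h

lemma integral_comp_pair {n : ℕ} {j k : Fin n} (hjk : j ≠ k) (g : ℝ × ℝ → ℝ)
    (hg : AEStronglyMeasurable g (unif.prod unif)) :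
    ∫ ω : Fin n → ℝ, g (ω j, ω k) ∂(Measure.pi fun _ : Fin n => unif)
      = ∫ p, g p ∂(unif.prod unif) := by
  have h := MeasureTheory.integral_map (φ := fun ω : Fin n → ℝ => (ω j, ω k)) (f := g)
    (mp_pair hjk).measurable.aemeasurable (by rwa [(mp_pair hjk).map_eq])
  rw [(mp_pair hjk).map_eq] at h
  exact h.symm

lemma integrable_comp_pair {n : ℕ} {j k : Fin n} (hjk : j ≠ k) {g : ℝ × ℝ → ℝ}
    (hg : Integrable g (unif.prod unif)) :
    Integrable (fun ω : Fin n → ℝ => g (ω j, ω k))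
      (Measure.pi fun _ : Fin n => unif) := by
  have h := ((mp_pair hjk).integrable_comp hg.aestronglyMeasurable).2 hg
  simpa [Function.comp_def] using h

end RiskAux

open RiskAux in
/-- For stress parameter `a = 1`, the expected value of the lower-tail weighted
mean square error equals `1/2`:
`E[-3n/2 + ∑ᵢ (2 U₍ᵢ₎ - ((2i-1)/n) ln U₍ᵢ₎)] = 1/2`, where `U₍₁₎ ≤ … ≤ U₍ₙ₎` are
the order statistics of `n` i.i.d. uniform random variables on `[0,1]`. -/
theorem risk_function_a_one (n : ℕ) (hn : 0 < n) :
    ∫ ω : Fin n → ℝ,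
        (-(3 * (n : ℝ)) / 2 +
          ∑ i : Fin n,
            (2 * ω (Tuple.sort ω i) -
              ((2 * (i : ℕ) + 1) / n) * Real.log (ω (Tuple.sort ω i))))
      ∂(Measure.pi fun _ : Fin n => volume.restrict (Set.Icc (0 : ℝ) 1))
      = 1 / 2 := by
  classical
  have hne : (n : ℝ) ≠ 0 := Nat.cast_ne_zero.2 hn.ne'
  have hmeq : (Measure.pi fun _ : Fin n => volume.restrict (Set.Icc (0 : ℝ) 1))
      = (Measure.pi fun _ : Fin n => unif) := rfl
  rw [hmeq]
  have hae : (fun ω : Fin n → ℝ =>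
      (-(3 * (n : ℝ)) / 2 +
        ∑ i : Fin n,
          (2 * ω (Tuple.sort ω i) -
            ((2 * (i : ℕ) + 1) / n) * Real.log (ω (Tuple.sort ω i)))))
      =ᶠ[ae (Measure.pi fun _ : Fin n => unif)]
      (fun ω : Fin n → ℝ =>
        -(3 * (n : ℝ)) / 2 +
          ((∑ j : Fin n, 2 * ω j)
            + ((∑ j : Fin n, (-(1 / (n : ℝ))) * Real.log (ω j))
              + ∑ j : Fin n, ∑ k : Fin n,
                  (-(2 / (n : ℝ))) * (if ω k < ω j then Real.log (ω j) else 0)))) := by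
    filter_upwards [ae_inj n] with ω hω
    rw [sum_identity hω]
  rw [integral_congr_ae hae]
  have hid : Integrable (fun x : ℝ => x) unif := by
    have h : IntegrableOn (fun x : ℝ => x) (Set.Icc (0:ℝ) 1) volume :=
      continuous_id.integrableOn_Icc
    exact h
  -- individual integrable pieces
  have hA : ∀ j : Fin n, Integrable (fun ω : Fin n → ℝ => 2 * ω j)
      (Measure.pi fun _ : Fin n => unif) :=
    fun j => integrable_comp_eval j (hid.const_mul 2)
  have hB : ∀ j : Fin n,
      Integrable (fun ω : Fin n → ℝ => (-(1 / (n : ℝ))) * Real.log (ω j))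
        (Measure.pi fun _ : Fin n => unif) :=
    fun j => integrable_comp_eval j (integrable_log_unif.const_mul _)
  have hC : ∀ j k : Fin n,
      Integrable (fun ω : Fin n → ℝ =>
          (-(2 / (n : ℝ))) * (if ω k < ω j then Real.log (ω j) else 0))
        (Measure.pi fun _ : Fin n => unif) := by
    intro j k
    rcases eq_or_ne k j with rfl | hkj
    · have hzero : (fun ω : Fin n → ℝ =>
          (-(2 / (n : ℝ))) * (if ω k < ω k then Real.log (ω k) else 0))
          = fun _ => (0 : ℝ) := by
        funext ω
        simp
      rw [hzero]
      exact integrable_const 0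
    · exact integrable_comp_pair (j := k) (k := j) hkj
        (integrable_pairfun.const_mul (-(2 / (n : ℝ))))
  -- values
  have hAv : ∀ j : Fin n,
      (∫ ω : Fin n → ℝ, 2 * ω j ∂(Measure.pi fun _ : Fin n => unif)) = 1 := by
    intro j
    have h1 := integral_comp_eval j (fun x => 2 * x) (hid.const_mul 2).aestronglyMeasurable
    have h2 : (∫ x, 2 * x ∂unif) = 1 := by
      rw [integral_const_mul, integral_id_unif]; norm_num
    exact h1.trans h2
  have hBv : ∀ j : Fin n,
      (∫ ω : Fin n → ℝ, (-(1 / (n : ℝ))) * Real.log (ω j)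
        ∂(Measure.pi fun _ : Fin n => unif)) = 1 / n := by
    intro j
    have h1 := integral_comp_eval j (fun x => (-(1 / (n : ℝ))) * Real.log x)
      (integrable_log_unif.const_mul _).aestronglyMeasurable
    have h2 : (∫ x, (-(1 / (n : ℝ))) * Real.log x ∂unif) = 1 / n := by
      rw [integral_const_mul, integral_log_unif]; ring
    exact h1.trans h2
  have hCv : ∀ j k : Fin n,
      (∫ ω : Fin n → ℝ,
          (-(2 / (n : ℝ))) * (if ω k < ω j then Real.log (ω j) else 0)
        ∂(Measure.pi fun _ : Fin n => unif))
      = if k = j then 0 else 1 / (2 * (n : ℝ)) := by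
    intro j k
    rcases eq_or_ne k j with rfl | hkj
    · have hzero : (fun ω : Fin n → ℝ =>
          (-(2 / (n : ℝ))) * (if ω k < ω k then Real.log (ω k) else 0))
          = fun _ => (0 : ℝ) := by
        funext ω
        simp
      rw [if_pos rfl, hzero, integral_zero]
    · rw [if_neg hkj]
      have h1 := integral_comp_pair (j := k) (k := j) hkj
        (fun p => (-(2 / (n : ℝ))) * (if p.1 < p.2 then Real.log p.2 else 0))
        ((integrable_pairfun.const_mul (-(2 / (n : ℝ)))).aestronglyMeasurable)
      have h2 : (∫ p : ℝ × ℝ,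
          (-(2 / (n : ℝ))) * (if p.1 < p.2 then Real.log p.2 else 0)
          ∂(unif.prod unif)) = 1 / (2 * (n : ℝ)) := by
        rw [integral_const_mul, integral_pairfun]; ring
      exact h1.trans h2
  -- assemble
  have hS4inner : ∀ j : Fin n,
      Integrable (fun ω : Fin n → ℝ => ∑ k : Fin n,
          (-(2 / (n : ℝ))) * (if ω k < ω j then Real.log (ω j) else 0))
        (Measure.pi fun _ : Fin n => unif) :=
    fun j => integrable_finset_sum _ fun k _ => hC j k
  have hS2 : Integrable (fun ω : Fin n → ℝ => ∑ j : Fin n, 2 * ω j)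
      (Measure.pi fun _ : Fin n => unif) := integrable_finset_sum _ fun j _ => hA j
  have hS3 : Integrable
      (fun ω : Fin n → ℝ => ∑ j : Fin n, (-(1 / (n : ℝ))) * Real.log (ω j))
      (Measure.pi fun _ : Fin n => unif) := integrable_finset_sum _ fun j _ => hB j
  have hS4 : Integrable (fun ω : Fin n → ℝ => ∑ j : Fin n, ∑ k : Fin n,
      (-(2 / (n : ℝ))) * (if ω k < ω j then Real.log (ω j) else 0))
      (Measure.pi fun _ : Fin n => unif) := integrable_finset_sum _ fun j _ => hS4inner j
  have h23 : Integrable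
      (fun ω : Fin n → ℝ => (∑ j : Fin n, (-(1 / (n : ℝ))) * Real.log (ω j))
        + ∑ j : Fin n, ∑ k : Fin n,
            (-(2 / (n : ℝ))) * (if ω k < ω j then Real.log (ω j) else 0))
      (Measure.pi fun _ : Fin n => unif) := hS3.add hS4
  have h234 : Integrable
      (fun ω : Fin n → ℝ => (∑ j : Fin n, 2 * ω j)
        + ((∑ j : Fin n, (-(1 / (n : ℝ))) * Real.log (ω j))
          + ∑ j : Fin n, ∑ k : Fin n,
              (-(2 / (n : ℝ))) * (if ω k < ω j then Real.log (ω j) else 0)))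
      (Measure.pi fun _ : Fin n => unif) := hS2.add h23
  rw [integral_add (integrable_const _) h234,
    integral_add hS2 h23, integral_add hS3 hS4, integral_const,
    integral_finset_sum _ (fun j _ => hA j), integral_finset_sum _ (fun j _ => hB j),
    integral_finset_sum _ (fun j _ => hS4inner j)]
  have e2 : (∑ j : Fin n, ∫ ω : Fin n → ℝ, 2 * ω j
      ∂(Measure.pi fun _ : Fin n => unif)) = (n : ℝ) := by
    rw [Finset.sum_congr rfl fun j _ => hAv j]
    simp
  have e3 : (∑ j : Fin n, ∫ ω : Fin n → ℝ, (-(1 / (n : ℝ))) * Real.log (ω j)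
      ∂(Measure.pi fun _ : Fin n => unif)) = 1 := by
    rw [Finset.sum_congr rfl fun j _ => hBv j, Finset.sum_const]
    simp only [Finset.card_univ, Fintype.card_fin, nsmul_eq_mul]
    field_simp
  have e4 : (∑ j : Fin n, ∫ ω : Fin n → ℝ, (∑ k : Fin n,
      (-(2 / (n : ℝ))) * (if ω k < ω j then Real.log (ω j) else 0))
      ∂(Measure.pi fun _ : Fin n => unif)) = ((n : ℝ) - 1) / 2 := by
    have ej : ∀ j : Fin n, (∫ ω : Fin n → ℝ, (∑ k : Fin n,
        (-(2 / (n : ℝ))) * (if ω k < ω j then Real.log (ω j) else 0))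
        ∂(Measure.pi fun _ : Fin n => unif)) = ((n : ℝ) - 1) / (2 * n) := by
      intro j
      rw [integral_finset_sum _ (fun k _ => hC j k),
        Finset.sum_congr rfl fun k _ => hCv j k]
      have hsplit : ∀ k : Fin n, (if k = j then (0:ℝ) else 1 / (2 * (n:ℝ)))
          = 1 / (2 * (n:ℝ)) - (if k = j then 1 / (2 * (n:ℝ)) else 0) := by
        intro k
        by_cases h : k = j <;> simp [h]
      rw [Finset.sum_congr rfl fun k _ => hsplit k, Finset.sum_sub_distrib,
        Finset.sum_const, Finset.sum_ite_eq' Finset.univ j (fun _ => 1 / (2 * (n:ℝ)))]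
      simp only [Finset.card_univ, Fintype.card_fin, Finset.mem_univ, if_true,
        nsmul_eq_mul]
      field_simp
    rw [Finset.sum_congr rfl fun j _ => ej j, Finset.sum_const]
    simp only [Finset.card_univ, Fintype.card_fin, nsmul_eq_mul]
    field_simp
  rw [e2, e3, e4]
  simp only [measureReal_def, measure_univ, ENNReal.toReal_one, one_smul, smul_eq_mul, one_mul]
  field_simp
  ring
end

section
/- The expected value of the Anderson–Darling statistic A_n^2 under the null hypothesis is 1 for every sample size n. -/
open MeasureTheory Set Real Filter Topology

namespace AD


noncomputable def useq (i : ℕ) : ℝ := ((i : ℝ) + 2)⁻¹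

lemma useq_pos (i : ℕ) : 0 < useq i := by rw [useq]; positivity

lemma useq_le_half (i : ℕ) : useq i ≤ 1 / 2 := by
  rw [useq, one_div]
  apply inv_anti₀ <;> [norm_num; · push_cast; linarith [Nat.cast_nonneg (α := ℝ) i]]

lemma useq_tendsto : Tendsto useq atTop (𝓝 0) :=
  tendsto_inv_atTop_zero.comp (tendsto_atTop_add_const_right _ 2 tendsto_natCast_atTop_atTop)

lemma integral_Ioo01 {f F : ℝ → ℝ} (hF : Continuous F)
    (hd : ∀ x ∈ Ioo (0:ℝ) 1, HasDerivAt F (f x) x)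
    (hi : IntegrableOn f (Ioo 0 1)) :
    ∫ x in Ioo (0:ℝ) 1, f x = F 1 - F 0 := by
  have hsub : ∀ i, Ioc (useq i) (1 - useq i) ⊆ Ioo (0:ℝ) 1 := by
    intro i x hx
    have h1 := useq_pos i
    exact ⟨h1.trans hx.1, lt_of_le_of_lt hx.2 (by linarith)⟩
  have hle : ∀ i, useq i ≤ 1 - useq i := fun i => by
    have := useq_le_half i; linarith
  have hcov : AECover (volume.restrict (Ioo (0:ℝ) 1)) atTop
      fun i => Ioc (useq i) (1 - useq i) :=
    aecover_Ioo_of_Ioc useq_tendsto (by simpa using (tendsto_const_nhds.sub useq_tendsto))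
  refine hcov.integral_eq_of_tendsto _ hi ?_
  have heq : ∀ i : ℕ, ∫ x in Ioc (useq i) (1 - useq i), f x ∂(volume.restrict (Ioo 0 1))
      = F (1 - useq i) - F (useq i) := by
    intro i
    rw [Measure.restrict_restrict measurableSet_Ioc,
      inter_eq_self_of_subset_left (hsub i)]
    have : ∫ x in Ioc (useq i) (1 - useq i), f x = ∫ x in (useq i)..(1 - useq i), f x := by
      rw [intervalIntegral.integral_of_le (hle i)]
    rw [this]
    apply intervalIntegral.integral_eq_sub_of_hasDerivAt
    · intro x hx
      rw [uIcc_of_le (hle i)] at hx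
      refine hd x ⟨lt_of_lt_of_le (useq_pos i) hx.1, lt_of_le_of_lt hx.2 ?_⟩
      have := useq_pos i; linarith
    · rw [intervalIntegrable_iff_integrableOn_Ioc_of_le (hle i)]
      exact hi.mono_set (hsub i)
  simp only [heq]
  exact ((hF.tendsto 1).comp (by simpa using (tendsto_const_nhds.sub useq_tendsto))).sub
    ((hF.tendsto 0).comp useq_tendsto)



lemma norm_bound (i : ℕ) : (∫ x in Ioc (useq i) 1, ‖log x‖) ≤ 1 := by
  have hu := useq_pos i
  have hu2 := useq_le_half i
  have h1 : ∀ x ∈ Ioc (useq i) 1, ‖log x‖ = -log x := by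
    intro x hx
    exact abs_of_nonpos (log_nonpos (le_of_lt (hu.trans hx.1)) hx.2)
  rw [setIntegral_congr_fun measurableSet_Ioc h1, MeasureTheory.integral_neg,
    ← intervalIntegral.integral_of_le (by linarith : useq i ≤ 1),
    integral_log]
  have : useq i * log (useq i) ≤ 0 := mul_log_nonpos (le_of_lt hu) (by linarith)
  simp only [log_one]
  linarith

lemma integrableOn_log : IntegrableOn log (Ioo (0:ℝ) 1) := by
  have : IntegrableOn log (Ioc (0:ℝ) 1) := by
    refine integrableOn_Ioc_of_intervalIntegral_norm_bounded_left
      (a := useq) (fun i => ?_) useq_tendsto (Eventually.of_forall norm_bound)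
    have hc : ContinuousOn log (Icc (useq i) 1) := by
      apply Real.continuousOn_log.mono
      intro x hx
      exact ne_of_gt ((useq_pos i).trans_le hx.1)
    exact (hc.integrableOn_Icc).mono_set Ioc_subset_Icc_self
  exact this.mono_set Ioo_subset_Ioc_self

lemma integrableOn_log_one_sub : IntegrableOn (fun x => log (1 - x)) (Ioo (0:ℝ) 1) := by
  have : IntegrableOn (fun x => log (1 - x)) (Ioc (0:ℝ) 1) := by
    refine integrableOn_Ioc_of_intervalIntegral_norm_bounded_right (l := atTop) (I := 1)
      (b := fun i => 1 - useq i) (fun i => ?_) ?_ (Eventually.of_forall fun i => ?_)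
    · have hc : ContinuousOn (fun x => log (1 - x)) (Icc 0 (1 - useq i)) := by
        apply ContinuousOn.log ((continuous_const.sub continuous_id).continuousOn)
        intro x hx
        have := useq_pos i
        have : useq i ≤ 1 - x := by linarith [hx.2]
        intro h
        simp only [Pi.sub_apply, id_eq] at h
        linarith
      exact hc.integrableOn_Icc.mono_set Ioc_subset_Icc_self
    · simpa using (tendsto_const_nhds.sub useq_tendsto)
    · have hu := useq_pos i
      have hu2 := useq_le_half i
      have h1 : ∀ x ∈ Ioc (0:ℝ) (1 - useq i), ‖log (1 - x)‖ = -log (1 - x) := by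
        intro x hx
        exact abs_of_nonpos (log_nonpos (by linarith [hx.2]) (by linarith [hx.1]))
      rw [setIntegral_congr_fun measurableSet_Ioc h1, MeasureTheory.integral_neg,
        ← intervalIntegral.integral_of_le (by linarith : (0:ℝ) ≤ 1 - useq i),
        intervalIntegral.integral_comp_sub_left log 1]
      have he : (1:ℝ) - (1 - useq i) = useq i := by ring
      rw [he, sub_zero, integral_log]
      have : useq i * log (useq i) ≤ 0 := mul_log_nonpos (le_of_lt hu) (by linarith)
      simp only [log_one]
      linarith
  exact this.mono_set Ioo_subset_Ioc_self

lemma integrableOn_mul_log : IntegrableOn (fun x => x * log x) (Ioo (0:ℝ) 1) := by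
  refine Integrable.mono' integrableOn_log.norm
    (continuous_mul_log.aestronglyMeasurable.restrict) ?_
  rw [ae_restrict_iff' measurableSet_Ioo]
  refine Eventually.of_forall fun x hx => ?_
  rw [norm_mul]
  calc ‖x‖ * ‖log x‖ ≤ 1 * ‖log x‖ := by
        apply mul_le_mul_of_nonneg_right _ (norm_nonneg _)
        rw [Real.norm_eq_abs, abs_of_pos hx.1]; exact le_of_lt hx.2
    _ = ‖log x‖ := one_mul _

lemma integrableOn_mul_log_one_sub : IntegrableOn (fun x => x * log (1 - x)) (Ioo (0:ℝ) 1) := by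
  refine Integrable.mono' integrableOn_log_one_sub.norm
    ((measurable_id.mul ((Real.measurable_log).comp
      (measurable_const.sub measurable_id))).aestronglyMeasurable) ?_
  rw [ae_restrict_iff' measurableSet_Ioo]
  refine Eventually.of_forall fun x hx => ?_
  rw [norm_mul]
  calc ‖x‖ * ‖log (1-x)‖ ≤ 1 * ‖log (1-x)‖ := by
        apply mul_le_mul_of_nonneg_right _ (norm_nonneg _)
        rw [Real.norm_eq_abs, abs_of_pos hx.1]; exact le_of_lt hx.2
    _ = ‖log (1-x)‖ := one_mul _

lemma hasDerivAt_one_sub_mul_log (x : ℝ) (hx : (1:ℝ) - x ≠ 0) :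
    HasDerivAt (fun y => (1 - y) * log (1 - y)) (-(log (1 - x) + 1)) x := by
  have h1 : HasDerivAt (fun y : ℝ => 1 - y) (-1) x := (hasDerivAt_id x).const_sub 1
  have := (Real.hasDerivAt_mul_log hx).comp x h1
  simpa [mul_comm, Function.comp_def] using this

lemma intA : ∫ x in Ioo (0:ℝ) 1, log x = -1 := by
  have := integral_Ioo01 (F := fun x => x * log x - x)
    (continuous_mul_log.sub continuous_id)
    (fun x hx => by
      simpa [Pi.sub_def] using (Real.hasDerivAt_mul_log (ne_of_gt hx.1)).sub (hasDerivAt_id x))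
    integrableOn_log
  simpa using this

lemma intB : ∫ x in Ioo (0:ℝ) 1, log (1 - x) = -1 := by
  have := integral_Ioo01 (F := fun x => -((1 - x) * log (1 - x)) - x)
    (((continuous_mul_log.comp (continuous_const.sub continuous_id)).neg).sub continuous_id)
    (fun x hx => by
      have h := ((hasDerivAt_one_sub_mul_log x (by simp only [ne_eq]; intro h; nlinarith [hx.2] : (1:ℝ) - x ≠ 0)).neg).sub (hasDerivAt_id x)
      refine h.congr_deriv ?_
      ring)
    integrableOn_log_one_sub
  simpa using this

lemma intC : ∫ x in Ioo (0:ℝ) 1, x * log x = -(1/4) := by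
  have := integral_Ioo01 (F := fun x => (x / 2) * (x * log x) - x ^ 2 / 4)
    (((continuous_id.div_const 2).mul continuous_mul_log).sub
      ((continuous_pow 2).div_const 4))
    (fun x hx => by
      have h := (((hasDerivAt_id x).div_const 2).mul (Real.hasDerivAt_mul_log (ne_of_gt hx.1))).sub
        ((hasDerivAt_pow 2 x).div_const 4)
      refine h.congr_deriv ?_
      simp only [id_eq]
      push_cast
      ring)
    integrableOn_mul_log
  simpa using this

lemma intD : ∫ x in Ioo (0:ℝ) 1, x * log (1 - x) = -(3/4) := by
  have := integral_Ioo01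
    (F := fun x => -(((1 + x) / 2) * ((1 - x) * log (1 - x))) - x / 2 - x ^ 2 / 4)
    (((((continuous_const.add continuous_id).div_const 2).mul
        (continuous_mul_log.comp (continuous_const.sub continuous_id))).neg.sub
        (continuous_id.div_const 2)).sub ((continuous_pow 2).div_const 4))
    (fun x hx => by
      have hne : (1:ℝ) - x ≠ 0 := by intro h; nlinarith [hx.2]
      have h := (((((hasDerivAt_id x).const_add 1).div_const 2).mul
          (hasDerivAt_one_sub_mul_log x hne)).neg.sub
          ((hasDerivAt_id x).div_const 2)).sub ((hasDerivAt_pow 2 x).div_const 4)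
      refine h.congr_deriv ?_
      simp only [id_eq]
      push_cast
      ring)
    integrableOn_mul_log_one_sub
  norm_num at this
  norm_num
  linarith [this]



noncomputable def μ01 : Measure ℝ := volume.restrict (Ioo 0 1)

instance : IsProbabilityMeasure μ01 :=
  ⟨by simp [μ01, Real.volume_Ioo]⟩

instance : NullSingletonClass μ01 := by unfold μ01; infer_instance

noncomputable def P (n : ℕ) : Measure (Fin n → ℝ) := Measure.pi fun _ => μ01

instance (n : ℕ) : IsProbabilityMeasure (P n) := by
  unfold P; infer_instance

variable {n : ℕ}

lemma map_eval (j : Fin n) :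
    Measure.map (fun ω : Fin n → ℝ => ω j) (P n) = μ01 := by
  ext s hs
  rw [Measure.map_apply (measurable_pi_apply j) hs]
  have : (fun ω : Fin n → ℝ => ω j) ⁻¹' s
      = Set.pi univ (Function.update (fun _ => (univ : Set ℝ)) j s) := by
    rw [← Set.eval_preimage]
  rw [this, P, Measure.pi_pi]
  have : ∀ i, μ01 (Function.update (fun _ => (univ : Set ℝ)) j s i)
      = Function.update (fun _ => μ01 univ) j (μ01 s) i := by
    intro i
    exact Function.apply_update (fun _ t => μ01 t) (fun _ => (univ : Set ℝ)) j s i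
  rw [Finset.prod_congr rfl fun i _ => this i, Finset.prod_update_of_mem (Finset.mem_univ j)]
  simp

lemma measurePreserving_eval (j : Fin n) :
    MeasurePreserving (fun ω : Fin n → ℝ => ω j) (P n) μ01 :=
  ⟨measurable_pi_apply j, map_eval j⟩

lemma map_pair {j k : Fin n} (hjk : j ≠ k) :
    Measure.map (fun ω : Fin n → ℝ => (ω j, ω k)) (P n) = μ01.prod μ01 := by
  classical
  refine (Measure.prod_eq fun s t hs ht => ?_).symm
  rw [Measure.map_apply ((measurable_pi_apply j).prodMk (measurable_pi_apply k))
    (hs.prod ht)]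
  have hpre : (fun ω : Fin n → ℝ => (ω j, ω k)) ⁻¹' (s ×ˢ t)
      = Set.pi univ (fun i => if i = j then s else if i = k then t else univ) := by
    ext ω
    simp only [mem_preimage, mem_prod, Set.mem_pi, mem_univ, forall_true_left]
    constructor
    · rintro ⟨h1, h2⟩ i
      by_cases hij : i = j
      · subst hij; simp [h1]
      · by_cases hik : i = k
        · subst hik; simp [hij, h2]
        · simp [hij, hik]
    · intro h
      refine ⟨?_, ?_⟩
      · have := h j; simpa using this
      · have := h k; simpa [hjk.symm, (Ne.symm hjk)] using this
  rw [hpre, P, Measure.pi_pi]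
  have hterm : ∀ i : Fin n, μ01 (if i = j then s else if i = k then t else univ)
      = if i = j then μ01 s else if i = k then μ01 t else 1 := by
    intro i
    by_cases hij : i = j
    · simp [hij]
    · by_cases hik : i = k <;> simp [hij, hik, Ne.symm hjk]
  rw [Finset.prod_congr rfl fun i _ => hterm i]
  rw [← Finset.mul_prod_erase Finset.univ _ (Finset.mem_univ j), if_pos rfl]
  have hk : k ∈ Finset.univ.erase j := Finset.mem_erase.mpr ⟨hjk.symm, Finset.mem_univ k⟩
  rw [← Finset.mul_prod_erase _ _ hk, if_neg (Ne.symm hjk), if_pos rfl]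
  have : ∏ i ∈ (Finset.univ.erase j).erase k,
      (if i = j then μ01 s else if i = k then μ01 t else 1) = 1 := by
    apply Finset.prod_eq_one
    intro i hi
    have h1 : i ≠ k := (Finset.mem_erase.mp hi).1
    have h2 : i ≠ j := (Finset.mem_erase.mp (Finset.mem_erase.mp hi).2).1
    simp [h1, h2]
  rw [this, mul_one]

lemma measurePreserving_pair {j k : Fin n} (hjk : j ≠ k) :
    MeasurePreserving (fun ω : Fin n → ℝ => (ω j, ω k)) (P n) (μ01.prod μ01) :=
  ⟨(measurable_pi_apply j).prodMk (measurable_pi_apply k), map_pair hjk⟩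

lemma ae_injective : ∀ᵐ ω ∂(P n), Function.Injective ω := by
  have h : ∀ᵐ ω ∂(P n), ∀ j k : Fin n, j ≠ k → ω j ≠ ω k := by
    rw [ae_all_iff]
    intro j
    rw [ae_all_iff]
    intro k
    rcases eq_or_ne j k with rfl | hjk
    · simp
    · have hD : MeasurableSet {p : ℝ × ℝ | p.1 = p.2} :=
        measurableSet_eq_fun measurable_fst measurable_snd
      have hnull : P n {ω : Fin n → ℝ | ω j = ω k} = 0 := by
        have hset : {ω : Fin n → ℝ | ω j = ω k}
            = (fun ω : Fin n → ℝ => (ω j, ω k)) ⁻¹' {p : ℝ × ℝ | p.1 = p.2} := rfl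
        rw [hset, ← Measure.map_apply ((measurable_pi_apply j).prodMk (measurable_pi_apply k)) hD,
          map_pair hjk, Measure.prod_apply hD]
        have : ∀ x : ℝ, μ01 (Prod.mk x ⁻¹' {p : ℝ × ℝ | p.1 = p.2}) = 0 := by
          intro x
          have : Prod.mk x ⁻¹' {p : ℝ × ℝ | p.1 = p.2} = {x} := by
            ext y; simp [eq_comm]
          rw [this]
          exact measure_singleton x
        simp [this, measure_singleton]
      have hae : ∀ᵐ ω ∂(P n), ω j ≠ ω k := by
        rw [ae_iff]
        simp only [ne_eq, not_not]
        exact hnull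
      exact hae.mono fun ω h _ => h
  refine h.mono fun ω hω => ?_
  intro a b hab
  by_contra hne
  exact hω a b hne hab


variable {n : ℕ}

noncomputable def rnk (ω : Fin n → ℝ) (j : Fin n) : ℕ :=
  (Finset.univ.filter fun k => ω k < ω j).card

lemma rnk_le (ω : Fin n → ℝ) (j : Fin n) : rnk ω j ≤ n - 1 := by
  have hsub : (Finset.univ.filter fun k => ω k < ω j) ⊆ Finset.univ.erase j := by
    intro k hk
    rw [Finset.mem_filter] at hk
    exact Finset.mem_erase.mpr ⟨fun h => absurd (h ▸ hk.2) (lt_irrefl _), Finset.mem_univ k⟩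
  calc rnk ω j ≤ (Finset.univ.erase j).card := Finset.card_le_card hsub
    _ = n - 1 := by rw [Finset.card_erase_of_mem (Finset.mem_univ j), Finset.card_univ,
      Fintype.card_fin]

lemma sort_symm_val (ω : Fin n → ℝ) (hω : Function.Injective ω) (j : Fin n) :
    (((Tuple.sort ω).symm j : Fin n) : ℕ) = rnk ω j := by
  set σ := Tuple.sort ω with hσ
  have hmono : StrictMono (ω ∘ σ) :=
    (Tuple.monotone_sort ω).strictMono_of_injective (hω.comp σ.injective)
  set i := σ.symm j with hi
  have hji : σ i = j := Equiv.apply_symm_apply σ j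
  have hset : (Finset.univ.filter fun k => ω k < ω j)
      = Finset.image σ (Finset.univ.filter fun m => m < i) := by
    ext k
    simp only [Finset.mem_filter, Finset.mem_univ, true_and, Finset.mem_image]
    constructor
    · intro hk
      refine ⟨σ.symm k, ?_, Equiv.apply_symm_apply σ k⟩
      have h2 : (ω ∘ σ) (σ.symm k) < (ω ∘ σ) i := by
        simpa [Function.comp_apply, Equiv.apply_symm_apply, hji] using hk
      exact hmono.lt_iff_lt.mp h2
    · rintro ⟨m, hm, rfl⟩
      have := hmono hm
      simpa [hji] using this
  rw [rnk, hset, Finset.card_image_of_injective _ σ.injective]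
  have : (Finset.univ.filter fun m : Fin n => m < i) = Finset.Iio i := by
    ext m; simp
  rw [this, Fin.card_Iio]

lemma pointwise_eq (hn : 0 < n) (ω : Fin n → ℝ) (hω : Function.Injective ω) :
    ∑ i : Fin n, ((2 * (i : ℕ) + 1) / (n:ℝ)) *
        (Real.log (ω (Tuple.sort ω i)) + Real.log (1 - ω (Tuple.sort ω i.rev)))
    = ∑ j : Fin n, ((Real.log (ω j) + (2*(n:ℝ)-1) * Real.log (1 - ω j))/(n:ℝ)
        + (2/(n:ℝ)) * ∑ k : Fin n,
          (if ω k < ω j then (Real.log (ω j) - Real.log (1 - ω j)) else 0)) := by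
  have hn0 : (n:ℝ) ≠ 0 := Nat.cast_ne_zero.mpr hn.ne'
  set σ := Tuple.sort ω with hσ
  -- step 1: split and reindex the second part by rev
  have step1 : ∑ i : Fin n, ((2 * (i : ℕ) + 1) / (n:ℝ)) *
        (Real.log (ω (σ i)) + Real.log (1 - ω (σ i.rev)))
      = ∑ i : Fin n, (((2 * (i : ℕ) + 1) / (n:ℝ)) * Real.log (ω (σ i))
          + ((2 * ((i.rev : Fin n) : ℕ) + 1) / (n:ℝ)) * Real.log (1 - ω (σ i))) := by
    simp_rw [mul_add, Finset.sum_add_distrib]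
    congr 1
    have := Equiv.sum_comp (Fin.revPerm (n := n))
      (fun i : Fin n => ((2 * ((i.rev : Fin n) : ℕ) + 1) / (n:ℝ)) * Real.log (1 - ω (σ i)))
    rw [← this]
    apply Finset.sum_congr rfl
    intro i _
    simp [Fin.rev_rev]
  rw [step1]
  -- step 2: reindex by σ
  have step2 := Equiv.sum_comp σ
    (fun j : Fin n => ((2 * ((σ.symm j : Fin n) : ℕ) + 1) / (n:ℝ)) * Real.log (ω j)
      + ((2 * (((σ.symm j).rev : Fin n) : ℕ) + 1) / (n:ℝ)) * Real.log (1 - ω j))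
  have step2' : ∀ i : Fin n,
      (((2 * ((σ.symm (σ i) : Fin n) : ℕ) + 1) / (n:ℝ)) * Real.log (ω (σ i))
        + ((2 * (((σ.symm (σ i)).rev : Fin n) : ℕ) + 1) / (n:ℝ)) * Real.log (1 - ω (σ i)))
      = (((2 * ((i : Fin n) : ℕ) + 1) / (n:ℝ)) * Real.log (ω (σ i))
        + ((2 * ((i.rev : Fin n) : ℕ) + 1) / (n:ℝ)) * Real.log (1 - ω (σ i))) := by
    intro i; rw [Equiv.symm_apply_apply]
  rw [Finset.sum_congr rfl fun i _ => (step2' i).symm, step2]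
  -- step 3: per-j rewriting
  apply Finset.sum_congr rfl
  intro j _
  have hc := sort_symm_val ω hω j
  have hcle := rnk_le ω j
  have hrev : (((σ.symm j).rev : Fin n) : ℕ) = n - 1 - rnk ω j := by
    rw [Fin.val_rev, hc]
    omega
  rw [hc, hrev]
  -- cast the second coefficient
  have hcast : ((n - 1 - rnk ω j : ℕ) : ℝ) = (n:ℝ) - 1 - (rnk ω j : ℝ) := by
    have h1 : (1:ℕ) ≤ n := hn
    push_cast [Nat.cast_sub (by omega : rnk ω j ≤ n - 1), Nat.cast_sub h1]
    ring
  -- indicator sum equals rank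
  have hind : ∑ k : Fin n,
      (if ω k < ω j then (Real.log (ω j) - Real.log (1 - ω j)) else 0)
      = (rnk ω j : ℝ) * (Real.log (ω j) - Real.log (1 - ω j)) := by
    rw [rnk, Finset.card_filter]
    push_cast
    rw [Finset.sum_mul]
    apply Finset.sum_congr rfl
    intro k _
    by_cases h : ω k < ω j <;> simp [h]
  rw [hind]
  push_cast [hcast]
  field_simp
  ring

lemma μ01_def : μ01 = volume.restrict (Ioo 0 1) := rfl

noncomputable def gφ : ℝ × ℝ → ℝ :=
  fun p => if p.2 < p.1 then Real.log p.1 - Real.log (1 - p.1) else 0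

lemma measurable_gφ : Measurable gφ :=
  Measurable.ite (measurableSet_lt measurable_snd measurable_fst)
    ((Real.measurable_log.comp measurable_fst).sub
      (Real.measurable_log.comp (measurable_const.sub measurable_fst)))
    measurable_const

lemma integrable_g : Integrable (fun x => Real.log x - Real.log (1 - x)) μ01 :=
  integrableOn_log.sub integrableOn_log_one_sub

lemma measurePreserving_fst01 : MeasurePreserving Prod.fst (μ01.prod μ01) μ01 :=
  ⟨measurable_fst, by simp [Measure.map_fst_prod]⟩

lemma integrable_gφ_prod : Integrable gφ (μ01.prod μ01) := by
  have hb : Integrable (fun p : ℝ × ℝ => ‖Real.log p.1 - Real.log (1 - p.1)‖)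
      (μ01.prod μ01) := by
    have := (measurePreserving_fst01.integrable_comp
      integrable_g.norm.aestronglyMeasurable).mpr integrable_g.norm
    simpa [Function.comp_def] using this
  refine Integrable.mono' hb measurable_gφ.aestronglyMeasurable ?_
  refine Eventually.of_forall fun p => ?_
  by_cases h : p.2 < p.1 <;> simp [gφ, h]

lemma μ01_Iio {x : ℝ} (hx : x ∈ Ioo (0:ℝ) 1) : ((volume.restrict (Ioo 0 1)) (Iio x)).toReal = x := by
  rw [Measure.restrict_apply measurableSet_Iio]
  have : Iio x ∩ Ioo 0 1 = Ioo 0 x := by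
    ext y
    constructor
    · rintro ⟨h1, h2, _⟩; exact ⟨h2, h1⟩
    · rintro ⟨h1, h2⟩; exact ⟨h2, h1, h2.trans hx.2⟩
  rw [this, Real.volume_Ioo, sub_zero, ENNReal.toReal_ofReal hx.1.le]

lemma integral_gφ_prod : ∫ p, gφ p ∂(μ01.prod μ01) = 1/2 := by
  rw [integral_prod _ integrable_gφ_prod]
  have hinner : ∀ x : ℝ, ∫ y, gφ (x, y) ∂μ01
      = (μ01 (Iio x)).toReal * (Real.log x - Real.log (1 - x)) := by
    intro x
    have h1 : (fun y => gφ (x, y))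
        = Set.indicator (Iio x) (fun _ => Real.log x - Real.log (1 - x)) := by
      funext y; simp [gφ, Set.indicator_apply, Set.mem_Iio]
    rw [h1, integral_indicator measurableSet_Iio, setIntegral_const, smul_eq_mul]
    rfl
  simp_rw [hinner]
  have h2 : ∫ x, (μ01 (Iio x)).toReal * (Real.log x - Real.log (1 - x)) ∂μ01
      = ∫ x in Ioo (0:ℝ) 1, x * (Real.log x - Real.log (1 - x)) := by
    rw [μ01_def]
    refine setIntegral_congr_fun measurableSet_Ioo fun x hx => ?_
    rw [μ01_Iio hx]
  rw [h2]
  have h3 : ∫ x in Ioo (0:ℝ) 1, x * (Real.log x - Real.log (1 - x))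
      = (∫ x in Ioo (0:ℝ) 1, x * Real.log x)
        - ∫ x in Ioo (0:ℝ) 1, x * Real.log (1 - x) := by
    rw [← MeasureTheory.integral_sub integrableOn_mul_log integrableOn_mul_log_one_sub]
    congr 1
    funext x
    ring
  rw [h3, intC, intD]
  norm_num

noncomputable def f0 (n : ℕ) (x : ℝ) : ℝ :=
  (Real.log x + (2*(n:ℝ)-1) * Real.log (1-x))/(n:ℝ)

lemma integrable_f0 {n : ℕ} : Integrable (f0 n) μ01 :=
  (integrableOn_log.add (integrableOn_log_one_sub.const_mul _)).div_const _

lemma integral_f0 {n : ℕ} (hn : 0 < n) : ∫ x, f0 n x ∂μ01 = -2 := by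
  have hn0 : (n:ℝ) ≠ 0 := Nat.cast_ne_zero.mpr hn.ne'
  unfold f0
  rw [μ01_def, integral_div, MeasureTheory.integral_add integrableOn_log
    (integrableOn_log_one_sub.const_mul _), MeasureTheory.integral_const_mul,
    intA, intB]
  field_simp
  ring

variable {n : ℕ}

lemma integrable_comp_eval {f : ℝ → ℝ} (hf : Integrable f μ01) (j : Fin n) :
    Integrable (fun ω : Fin n → ℝ => f (ω j)) (P n) := by
  have := ((measurePreserving_eval j).integrable_comp hf.aestronglyMeasurable).mpr hf
  simpa [Function.comp_def] using this

lemma integral_comp_eval {f : ℝ → ℝ} (hf : AEStronglyMeasurable f μ01) (j : Fin n) :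
    ∫ ω, f (ω j) ∂(P n) = ∫ x, f x ∂μ01 := by
  have h := integral_map (μ := P n) (φ := fun ω : Fin n → ℝ => ω j)
    (measurable_pi_apply j).aemeasurable (f := f) (by rw [map_eval j]; exact hf)
  rw [map_eval j] at h
  exact h.symm

lemma integrable_comp_pair {j k : Fin n} (hjk : j ≠ k) :
    Integrable (fun ω : Fin n → ℝ => gφ (ω j, ω k)) (P n) := by
  have := ((measurePreserving_pair hjk).integrable_comp
    integrable_gφ_prod.aestronglyMeasurable).mpr integrable_gφ_prod
  simpa [Function.comp_def] using this

lemma integral_comp_pair {j k : Fin n} (hjk : j ≠ k) :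
    ∫ ω, gφ (ω j, ω k) ∂(P n) = 1/2 := by
  have hm : Measurable (fun ω : Fin n → ℝ => (ω j, ω k)) :=
    (measurable_pi_apply j).prodMk (measurable_pi_apply k)
  have h := integral_map (μ := P n) hm.aemeasurable (f := gφ)
    (by rw [map_pair hjk]; exact integrable_gφ_prod.aestronglyMeasurable)
  rw [map_pair hjk, integral_gφ_prod] at h
  exact h.symm

end AD

open AD

/-- The expected value of the Anderson–Darling statistic
`Aₙ² = -n - ∑ᵢ ((2i-1)/n)[ln U₍ᵢ₎ + ln(1 - U₍ₙ₋ᵢ₊₁₎)]` under the null hypothesis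
is `1`, for every sample size `n`. -/
theorem expected_anderson_darling (n : ℕ) (hn : 0 < n) :
    ∫ ω : Fin n → ℝ,
        (-(n : ℝ) -
          ∑ i : Fin n, ((2 * (i : ℕ) + 1) / n) *
            (Real.log (ω (Tuple.sort ω i)) +
              Real.log (1 - ω (Tuple.sort ω i.rev))))
      ∂(Measure.pi fun _ : Fin n => volume.restrict (Set.Icc (0 : ℝ) 1))
      = 1 := by
  classical
  have hn0 : (n:ℝ) ≠ 0 := Nat.cast_ne_zero.mpr hn.ne'
  have hmeq : (Measure.pi fun _ : Fin n => volume.restrict (Set.Icc (0:ℝ) 1)) = P n := by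
    refine congrArg Measure.pi (funext fun _ => ?_)
    rw [μ01_def]
    exact (Measure.restrict_congr_set Ioo_ae_eq_Icc).symm
  rw [hmeq]
  have hae : (fun ω : Fin n → ℝ => (-(n : ℝ) -
          ∑ i : Fin n, ((2 * (i : ℕ) + 1) / (n:ℝ)) *
            (Real.log (ω (Tuple.sort ω i)) +
              Real.log (1 - ω (Tuple.sort ω i.rev)))))
      =ᵐ[P n] (fun ω => -(n:ℝ) -
          ∑ j : Fin n, (f0 n (ω j) + (2/(n:ℝ)) * ∑ k : Fin n, gφ (ω j, ω k))) := by
    refine ae_injective.mono fun ω hω => ?_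
    dsimp only
    rw [pointwise_eq hn ω hω]
    rfl
  rw [integral_congr_ae hae]
  have hterm : ∀ j : Fin n, Integrable
      (fun ω : Fin n → ℝ => f0 n (ω j) + (2/(n:ℝ)) * ∑ k : Fin n, gφ (ω j, ω k)) (P n) := by
    intro j
    refine (integrable_comp_eval integrable_f0 j).add ?_
    refine Integrable.const_mul ?_ _
    refine integrable_finset_sum _ fun k _ => ?_
    rcases eq_or_ne k j with rfl | hkj
    · have h0 : (fun ω : Fin n → ℝ => gφ (ω k, ω k)) = fun _ => 0 := by
        funext ω; simp [gφ]
      rw [h0]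
      exact integrable_const 0
    · exact integrable_comp_pair (Ne.symm hkj)
  have hD : Integrable
      (fun ω => ∑ j : Fin n, (f0 n (ω j) + (2/(n:ℝ)) * ∑ k : Fin n, gφ (ω j, ω k))) (P n) :=
    integrable_finset_sum _ fun j _ => hterm j
  rw [MeasureTheory.integral_sub (integrable_const _) hD, integral_const,
    integral_finset_sum _ fun j _ => hterm j]
  have hval : ∀ j : Fin n,
      ∫ ω, (f0 n (ω j) + (2/(n:ℝ)) * ∑ k : Fin n, gφ (ω j, ω k)) ∂(P n)
        = -2 + ((n:ℝ) - 1)/(n:ℝ) := by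
    intro j
    have hintsum : Integrable (fun ω : Fin n → ℝ => ∑ k : Fin n, gφ (ω j, ω k)) (P n) := by
      refine integrable_finset_sum _ fun k _ => ?_
      rcases eq_or_ne k j with rfl | hkj
      · have h0 : (fun ω : Fin n → ℝ => gφ (ω k, ω k)) = fun _ => 0 := by
          funext ω; simp [gφ]
        rw [h0]; exact integrable_const 0
      · exact integrable_comp_pair (Ne.symm hkj)
    rw [MeasureTheory.integral_add (integrable_comp_eval integrable_f0 j)
      (hintsum.const_mul _), integral_comp_eval integrable_f0.aestronglyMeasurable j,
      integral_f0 hn, MeasureTheory.integral_const_mul,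
      integral_finset_sum _ fun k _ => ?_]
    rotate_left
    · rcases eq_or_ne k j with rfl | hkj
      · have h0 : (fun ω : Fin n → ℝ => gφ (ω k, ω k)) = fun _ => 0 := by
          funext ω; simp [gφ]
        rw [h0]; exact integrable_const 0
      · exact integrable_comp_pair (Ne.symm hkj)
    have hterm2 : ∀ k : Fin n, ∫ ω, gφ (ω j, ω k) ∂(P n)
        = if k = j then 0 else 1/2 := by
      intro k
      rcases eq_or_ne k j with rfl | hkj
      · have h0 : (fun ω : Fin n → ℝ => gφ (ω k, ω k)) = fun _ => 0 := by
          funext ω; simp [gφ]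
        rw [h0, if_pos rfl]
        simp
      · rw [if_neg hkj]
        exact integral_comp_pair (Ne.symm hkj)
    rw [Finset.sum_congr rfl fun k _ => hterm2 k]
    have hupd : (fun k : Fin n => if k = j then (0:ℝ) else 1/2)
        = Function.update (fun _ : Fin n => (1:ℝ)/2) j 0 := by
      funext k
      rw [Function.update_apply]
    rw [hupd, Finset.sum_update_of_mem (Finset.mem_univ j), Finset.sum_const,
      Finset.sdiff_singleton_eq_erase, Finset.card_erase_of_mem (Finset.mem_univ j),
      Finset.card_univ, Fintype.card_fin]
    have hcast : ((n - 1 : ℕ) : ℝ) = (n:ℝ) - 1 := by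
      push_cast [Nat.cast_sub hn]
      ring
    rw [nsmul_eq_mul, hcast]
    field_simp
    ring
  rw [Finset.sum_congr rfl fun j _ => hval j, Finset.sum_const, Finset.card_univ,
    Fintype.card_fin, nsmul_eq_mul]
  simp only [measure_univ, probReal_univ, ENNReal.toReal_one, smul_eq_mul, one_mul]
  field_simp
  ring
end
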